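/- The quartic polynomial P = X^4 − 4·X^3 + 36·V·X^2 + 2·U^2·X^2 + 4·U^2·X − 8·U^2·V·X + 36·U^2·V^2 + U^4 − 4·U^2·V, regarded as a polynomial in X over the rational function field ℚ(U,V), has discriminant equal to a nonzero square in ℚ(U,V). -/

import Mathlib

open Polynomial

/-- The monic quartic `X^4 + a1 X^3 + a2 X^2 + a3 X + a4`. -/
noncomputable def quartic {k : Type*} [Field k] (a1 a2 a3 a4 : k) : k[X] :=
  X ^ 4 + C a1 * X ^ 3 + C a2 * X ^ 2 + C a3 * X + C a4

/-- The remainder of `(P')^2` under Euclidean division by the monic quartic `P`. -/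
noncomputable def resCubic {k : Type*} [Field k] (a1 a2 a3 a4 : k) : k[X] :=
  (derivative (quartic a1 a2 a3 a4)) ^ 2 %ₘ quartic a1 a2 a3 a4

/-- Discriminant of the monic quartic `X^4 + p X^3 + q X^2 + r X + s`. -/
def quarticDisc {R : Type*} [CommRing R] (p q r s : R) : R :=
  256*s^3 - 192*p*r*s^2 - 128*q^2*s^2 + 144*p^2*q*s^2 - 27*p^4*s^2
  + 144*q*r^2*s - 6*p^2*r^2*s - 80*p*q^2*r*s + 18*p^3*q*r*s + 16*q^4*s
  - 4*p^2*q^3*s - 27*r^4 + 18*p*q*r^3 - 4*p^3*r^3 - 4*q^3*r^2 + p^2*q^2*r^2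

/-- Discriminant of the cubic `b0 X^3 + b1 X^2 + b2 X + b3`. -/
def cubicDisc {R : Type*} [CommRing R] (b0 b1 b2 b3 : R) : R :=
  b1^2*b2^2 - 4*b0*b2^3 - 4*b1^3*b3 + 18*b0*b1*b2*b3 - 27*b0^2*b3^2


/-- The field ℚ(U,V). -/
noncomputable abbrev kUV : Type := FractionRing (MvPolynomial (Fin 2) ℚ)

/-- The indeterminate U in ℚ(U,V). -/
noncomputable def Uu : kUV := algebraMap (MvPolynomial (Fin 2) ℚ) kUV (MvPolynomial.X 0)

/-- The indeterminate V in ℚ(U,V). -/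
noncomputable def Vv : kUV := algebraMap (MvPolynomial (Fin 2) ℚ) kUV (MvPolynomial.X 1)

/-- The quartic P of Proposition 1 over ℚ(U,V). -/
noncomputable def Pspec : Polynomial kUV :=
  Polynomial.X ^ 4 - 4 * Polynomial.X ^ 3 + Polynomial.C (36 * Vv) * Polynomial.X ^ 2
    + Polynomial.C (2 * Uu ^ 2) * Polynomial.X ^ 2
    + Polynomial.C (4 * Uu ^ 2) * Polynomial.X - Polynomial.C (8 * Uu ^ 2 * Vv) * Polynomial.X
    + Polynomial.C (36 * Uu ^ 2 * Vv ^ 2 + Uu ^ 4 - 4 * Uu ^ 2 * Vv)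


noncomputable def sqrtW : MvPolynomial (Fin 2) ℚ :=
  128 * MvPolynomial.X 0 ^ 3 - 128 * MvPolynomial.X 0 ^ 5
    - 1152 * MvPolynomial.X 0 ^ 3 * MvPolynomial.X 1
    + 128 * MvPolynomial.X 0 ^ 5 * MvPolynomial.X 1
    + 3456 * MvPolynomial.X 0 * MvPolynomial.X 1 ^ 2
    - 3456 * MvPolynomial.X 0 ^ 3 * MvPolynomial.X 1 ^ 2
    - 31104 * MvPolynomial.X 0 * MvPolynomial.X 1 ^ 3
    + 3456 * MvPolynomial.X 0 ^ 3 * MvPolynomial.X 1 ^ 3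

lemma sqrtW_ne_zero : sqrtW ≠ 0 := by
  intro h
  have := congrArg (MvPolynomial.eval (![1, 2] : Fin 2 → ℚ)) h
  simp [sqrtW] at this
  norm_num at this

lemma key_eq :
    quarticDisc (-4 : kUV) (36*Vv + 2*Uu^2) (4*Uu^2 - 8*Uu^2*Vv)
        (36*Uu^2*Vv^2 + Uu^4 - 4*Uu^2*Vv)
      = (algebraMap (MvPolynomial (Fin 2) ℚ) kUV sqrtW) ^ 2 := by
  have h : algebraMap (MvPolynomial (Fin 2) ℚ) kUV sqrtW
      = 128 * Uu ^ 3 - 128 * Uu ^ 5 - 1152 * Uu ^ 3 * Vv + 128 * Uu ^ 5 * Vv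
        + 3456 * Uu * Vv ^ 2 - 3456 * Uu ^ 3 * Vv ^ 2
        - 31104 * Uu * Vv ^ 3 + 3456 * Uu ^ 3 * Vv ^ 3 := by
    simp [sqrtW, Uu, Vv, map_ofNat]
  rw [h, quarticDisc]
  ring

/-- The discriminant of the quartic P of Proposition 1 is a nonzero square in ℚ(U,V). -/
theorem stmt_9 :
    quarticDisc (-4 : kUV) (36*Vv + 2*Uu^2) (4*Uu^2 - 8*Uu^2*Vv)
        (36*Uu^2*Vv^2 + Uu^4 - 4*Uu^2*Vv) ≠ 0 ∧
    IsSquare (quarticDisc (-4 : kUV) (36*Vv + 2*Uu^2) (4*Uu^2 - 8*Uu^2*Vv)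
        (36*Uu^2*Vv^2 + Uu^4 - 4*Uu^2*Vv)) := by
  rw [key_eq]
  refine ⟨pow_ne_zero _ ?_, ⟨_, sq _⟩⟩
  exact fun h => sqrtW_ne_zero ((FaithfulSMul.algebraMap_injective _ kUV) (h.trans (map_zero _).symm))
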